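/- Let h be μ̄-strongly convex and (L+μ)-smooth with minimizer w⋆, and let gradient descent with 0 < α < 2/(L+μ) start at w⁽⁰⁾. Then for any target γ ∈ (0,1], after n ≥ 2β·log((L+μ)/(γμ̄)) iterations (β = 2/(αμ̄(2-α(L+μ)))), the iterate w⁽ⁿ⁾ satisfies ‖∇h(w⁽ⁿ⁾)‖ ≤ γ‖∇h(w⁽⁰⁾)‖, i.e., w⁽ⁿ⁾ is a γ-inexact solution. -/

import Mathlib

set_option maxHeartbeats 1000000

open RealInnerProductSpace

section AuxLemmas

variable {E : Type*} [NormedAddCommGroup E] [InnerProductSpace ℝ E] [CompleteSpace E]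

private lemma line_hasDerivAt (f : E → ℝ) (hf : Differentiable ℝ f) (x v : E) (t : ℝ) :
    HasDerivAt (fun s : ℝ => f (x + s • v)) (⟪gradient f (x + t • v), v⟫) t := by
  have h1 : HasDerivAt (fun s : ℝ => x + s • v) v t := by
    simpa using ((hasDerivAt_id t).smul_const v).const_add x
  have h2 := (hf (x + t • v)).hasGradientAt
  rw [hasGradientAt_iff_hasFDerivAt] at h2
  have h3 := h2.comp_hasDerivAt t h1
  simp only [Function.comp_def] at h3
  exact h3

omit [CompleteSpace E] in
private lemma norm_line_sq (y v : E) (t : ℝ) :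
    ‖y + t • v‖ ^ 2 = ‖y‖ ^ 2 + 2 * ⟪y, v⟫ * t + ‖v‖ ^ 2 * t ^ 2 := by
  rw [norm_add_sq_real, real_inner_smul_right, norm_smul, Real.norm_eq_abs, mul_pow, sq_abs]
  ring

private lemma strong_grad_ineq (f : E → ℝ) (μb : ℝ) (hf : Differentiable ℝ f)
    (hsc : ConvexOn ℝ Set.univ (fun v : E => f v - (μb / 2) * ‖v‖ ^ 2)) (y v : E) :
    f y + ⟪gradient f y, v⟫ + (μb / 2) * ‖v‖ ^ 2 ≤ f (y + v) := by
  set φ : ℝ → ℝ := fun t => f (y + t • v) - (μb / 2) * ‖y + t • v‖ ^ 2 with hφdef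
  have hline : ∀ t : ℝ, (AffineMap.lineMap y (y + v) : ℝ →ᵃ[ℝ] E) t = y + t • v := by
    intro t
    simp [AffineMap.lineMap_apply]
    abel
  have hφconv : ConvexOn ℝ Set.univ φ := by
    have h := hsc.comp_affineMap (AffineMap.lineMap y (y + v) : ℝ →ᵃ[ℝ] E)
    have hfun : φ = (fun u : E => f u - (μb / 2) * ‖u‖ ^ 2) ∘
        (AffineMap.lineMap y (y + v) : ℝ →ᵃ[ℝ] E) := by
      funext t; simp [Function.comp, hline t]; rfl
    rw [hfun]
    simpa using h
  have hφderiv : ∀ t : ℝ, HasDerivAt φ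
      (⟪gradient f (y + t • v), v⟫ - (μb / 2) * (2 * ⟪y, v⟫ + ‖v‖ ^ 2 * (2 * t))) t := by
    intro t
    have hA := line_hasDerivAt f hf y v t
    have hB : HasDerivAt (fun s : ℝ => (μb / 2) * ‖y + s • v‖ ^ 2)
        ((μb / 2) * (2 * ⟪y, v⟫ + ‖v‖ ^ 2 * (2 * t))) t := by
      have hq : HasDerivAt (fun s : ℝ => ‖y‖ ^ 2 + 2 * ⟪y, v⟫ * s + ‖v‖ ^ 2 * s ^ 2)
          (2 * ⟪y, v⟫ + ‖v‖ ^ 2 * (2 * t)) t := by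
        have h2 := (((hasDerivAt_id t).const_mul (2 * ⟪y, v⟫)).const_add (‖y‖ ^ 2)).add
          ((hasDerivAt_pow 2 t).const_mul (‖v‖ ^ 2))
        have : 2 * ⟪y, v⟫ + ‖v‖ ^ 2 * (2 * t) = 2 * ⟪y, v⟫ * 1 + ‖v‖ ^ 2 * (↑2 * t ^ (2 - 1)) := by
          push_cast; ring
        rw [this]
        exact h2
      have heq : (fun s : ℝ => (μb / 2) * ‖y + s • v‖ ^ 2)
          = fun s : ℝ => (μb / 2) * (‖y‖ ^ 2 + 2 * ⟪y, v⟫ * s + ‖v‖ ^ 2 * s ^ 2) := by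
        funext s; rw [norm_line_sq]
      rw [heq]
      exact hq.const_mul _
    exact hA.sub hB
  have hslope := hφconv.le_slope_of_hasDerivAt (Set.mem_univ 0) (Set.mem_univ 1)
    zero_lt_one (hφderiv 0)
  rw [slope_def_field] at hslope
  simp only [hφdef, zero_smul, one_smul, add_zero, sub_zero, div_one, mul_zero] at hslope
  have hnorm := norm_line_sq y v 1
  simp only [one_smul, one_pow, mul_one] at hnorm
  rw [hnorm] at hslope
  linarith

private lemma strong_mono (f : E → ℝ) (μb : ℝ) (hf : Differentiable ℝ f)
    (hsc : ConvexOn ℝ Set.univ (fun v : E => f v - (μb / 2) * ‖v‖ ^ 2)) (x y : E) :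
    μb * ‖x - y‖ ^ 2 ≤ ⟪gradient f x - gradient f y, x - y⟫ := by
  have h1 := strong_grad_ineq f μb hf hsc y (x - y)
  have h2 := strong_grad_ineq f μb hf hsc x (y - x)
  rw [add_sub_cancel] at h1
  rw [add_sub_cancel] at h2
  have e1 : ⟪gradient f x - gradient f y, x - y⟫
      = -⟪gradient f x, y - x⟫ - ⟪gradient f y, x - y⟫ := by
    rw [inner_sub_left]
    rw [show (y - x : E) = -(x - y) by abel, inner_neg_right]
    ring
  have e2 : ‖y - x‖ = ‖x - y‖ := norm_sub_rev _ _
  rw [e2] at h2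
  rw [e1]
  linarith

private lemma descent_lemma (f : E → ℝ) (K : ℝ) (hK : 0 ≤ K) (hf : Differentiable ℝ f)
    (hLip : ∀ a b, ‖gradient f a - gradient f b‖ ≤ K * ‖a - b‖) (x v : E) :
    f (x + v) ≤ f x + ⟪gradient f x, v⟫ + (K / 2) * ‖v‖ ^ 2 := by
  have hgradcont : Continuous (gradient f) := by
    have : LipschitzWith ⟨K, hK⟩ (gradient f) := by
      apply LipschitzWith.of_dist_le_mul
      intro a b
      rw [dist_eq_norm, dist_eq_norm]; exact hLip a b
    exact this.continuous
  set ψ' : ℝ → ℝ := fun s => ⟪gradient f (x + s • v), v⟫ with hψ'def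
  have hψ'cont : Continuous ψ' := by
    apply Continuous.inner
    · exact hgradcont.comp (by continuity)
    · exact continuous_const
  have hftc : f (x + v) - f x = ∫ s in (0:ℝ)..1, ψ' s := by
    have := intervalIntegral.integral_eq_sub_of_hasDerivAt
      (f := fun s : ℝ => f (x + s • v)) (f' := ψ')
      (fun s _ => line_hasDerivAt f hf x v s)
      (hψ'cont.intervalIntegrable 0 1)
    rw [this]
    simp
  have hbound : ∀ s ∈ Set.Icc (0:ℝ) 1, ψ' s ≤ ψ' 0 + (K * ‖v‖ ^ 2) * s := by
    intro s hs
    have h1 : ψ' s - ψ' 0 = ⟪gradient f (x + s • v) - gradient f x, v⟫ := by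
      simp [hψ'def, inner_sub_left]
    have h2 : ⟪gradient f (x + s • v) - gradient f x, v⟫
        ≤ ‖gradient f (x + s • v) - gradient f x‖ * ‖v‖ := real_inner_le_norm _ _
    have h3 : ‖gradient f (x + s • v) - gradient f x‖ ≤ K * ‖s • v‖ := by
      simpa using hLip (x + s • v) x
    have h4 : ‖s • v‖ = s * ‖v‖ := by
      rw [norm_smul, Real.norm_eq_abs, abs_of_nonneg hs.1]
    nlinarith [norm_nonneg v, hs.1, mul_nonneg hK (norm_nonneg v)]
  have hint : ∫ s in (0:ℝ)..1, ψ' s ≤ ∫ s in (0:ℝ)..1, (ψ' 0 + (K * ‖v‖ ^ 2) * s) := by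
    apply intervalIntegral.integral_mono_on zero_le_one
      (hψ'cont.intervalIntegrable 0 1)
      ((continuous_const.add (continuous_const.mul continuous_id)).intervalIntegrable 0 1)
    exact hbound
  have hval : ∫ s in (0:ℝ)..1, (ψ' 0 + (K * ‖v‖ ^ 2) * s) = ψ' 0 + (K / 2) * ‖v‖ ^ 2 := by
    rw [intervalIntegral.integral_add intervalIntegrable_const
      ((intervalIntegral.intervalIntegrable_id).const_mul _)]
    rw [intervalIntegral.integral_const_mul, integral_id]
    simp
    ring
  have hψ0 : ψ' 0 = ⟪gradient f x, v⟫ := by simp [hψ'def]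
  rw [hval, hψ0] at hint
  linarith [hftc ▸ hint]

private lemma bregman_lower (f : E → ℝ) (K : ℝ) (hK : 0 < K) (hf : Differentiable ℝ f)
    (hconv : ∀ y v : E, f y + ⟪gradient f y, v⟫ ≤ f (y + v))
    (hLip : ∀ a b, ‖gradient f a - gradient f b‖ ≤ K * ‖a - b‖) (x y : E) :
    (1 / (2 * K)) * ‖gradient f y - gradient f x‖ ^ 2
      ≤ f y - f x - ⟪gradient f x, y - x⟫ := by
  set u := gradient f y - gradient f x with hu
  have hd := descent_lemma f K hK.le hf hLip y (-((1/K) • u))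
  have hc := hconv x (y + -((1/K) • u) - x)
  rw [add_sub_cancel] at hc
  have e1 : ⟪gradient f y, -((1/K) • u)⟫ = -(1/K) * ⟪gradient f y, u⟫ := by
    rw [inner_neg_right, real_inner_smul_right]; ring
  have e2 : ‖-((1/K) • u)‖ ^ 2 = (1/K)^2 * ‖u‖^2 := by
    rw [norm_neg, norm_smul, Real.norm_eq_abs, mul_pow, sq_abs]
  have e3 : ⟪gradient f x, y + -((1/K) • u) - x⟫
      = ⟪gradient f x, y - x⟫ - (1/K) * ⟪gradient f x, u⟫ := by
    rw [show (y + -((1/K) • u) - x : E) = (y - x) - (1/K) • u by abel,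
      inner_sub_right, real_inner_smul_right]
  have e4 : ⟪gradient f y, u⟫ - ⟪gradient f x, u⟫ = ‖u‖^2 := by
    rw [← inner_sub_left, ← hu, real_inner_self_eq_norm_sq]
  rw [e1, e2] at hd
  rw [e3] at hc
  have hK2 : (0:ℝ) < 2 * K := by linarith
  have expand : (K/2) * ((1/K)^2 * ‖u‖^2) = (1/(2*K)) * ‖u‖^2 := by
    field_simp
  rw [expand] at hd
  have e5 : (1/K) * ⟪gradient f y, u⟫ - (1/K) * ⟪gradient f x, u⟫ = (1/K) * ‖u‖^2 := by
    rw [← mul_sub, e4]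
  have e6 : (1/K) * ‖u‖^2 = 2 * ((1/(2*K)) * ‖u‖^2) := by
    rw [show (1:ℝ)/K = 2*(1/(2*K)) by field_simp]
    ring
  linarith [hc.trans hd]

private lemma cocoercive (f : E → ℝ) (K : ℝ) (hK : 0 < K) (hf : Differentiable ℝ f)
    (hconv : ∀ y v : E, f y + ⟪gradient f y, v⟫ ≤ f (y + v))
    (hLip : ∀ a b, ‖gradient f a - gradient f b‖ ≤ K * ‖a - b‖) (x y : E) :
    (1 / K) * ‖gradient f x - gradient f y‖ ^ 2
      ≤ ⟪gradient f x - gradient f y, x - y⟫ := by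
  have h1 := bregman_lower f K hK hf hconv hLip x y
  have h2 := bregman_lower f K hK hf hconv hLip y x
  have e0 : ‖gradient f y - gradient f x‖ = ‖gradient f x - gradient f y‖ := norm_sub_rev _ _
  rw [e0] at h1
  have e1 : ⟪gradient f x - gradient f y, x - y⟫
      = -⟪gradient f x, y - x⟫ - ⟪gradient f y, x - y⟫ := by
    rw [inner_sub_left, show (y - x : E) = -(x - y) by abel, inner_neg_right]
    ring
  rw [e1]
  have e6 : (1/K) * ‖gradient f x - gradient f y‖^2
      = 2 * ((1/(2*K)) * ‖gradient f x - gradient f y‖^2) := by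
    rw [show (1:ℝ)/K = 2*(1/(2*K)) by field_simp]
    ring
  linarith [h1, h2]

end AuxLemmas

/-- Theorem 2 of the paper: with `n ≥ 2β log((L+μ)/(γμ̄))` gradient descent iterations
(`β = 2/(αμ̄(2 - α(L+μ)))`), the iterate is a `γ`-inexact solution:
`‖∇h(w⁽ⁿ⁾)‖ ≤ γ‖∇h(w⁽⁰⁾)‖`. -/
theorem gd_gamma_inexact_after_enough_iterations
    {d : ℕ} (h : EuclideanSpace ℝ (Fin d) → ℝ)
    (L μ μbar α γ β : ℝ) (hL : 0 < L) (hμ : 0 < μ) (hμbar : 0 < μbar)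
    (hα : 0 < α) (hα2 : α < 2 / (L + μ))
    (hγ0 : 0 < γ) (hγ1 : γ ≤ 1)
    (hβ : β = 2 / (α * μbar * (2 - α * (L + μ))))
    (hdiff : Differentiable ℝ h)
    (hsc : ConvexOn ℝ Set.univ
      (fun v : EuclideanSpace ℝ (Fin d) => h v - (μbar / 2) * ‖v‖ ^ 2))
    (hLip : ∀ x y, ‖gradient h x - gradient h y‖ ≤ (L + μ) * ‖x - y‖)
    (wstar : EuclideanSpace ℝ (Fin d)) (hmin : ∀ v, h wstar ≤ h v)
    (w : ℕ → EuclideanSpace ℝ (Fin d))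
    (hiter : ∀ k : ℕ, w (k + 1) = w k - α • gradient h (w k))
    (n : ℕ) (hn : (n : ℝ) ≥ 2 * β * Real.log ((L + μ) / (γ * μbar))) :
    ‖gradient h (w n)‖ ≤ γ * ‖gradient h (w 0)‖ := by
  rcases Nat.eq_zero_or_pos d with rfl | hd
  · have h0 : gradient h (w n) = 0 := Subsingleton.elim _ _
    have h1 : gradient h (w 0) = 0 := Subsingleton.elim _ _
    simp [h0, h1]
  set K := L + μ with hKdef
  have hKpos : 0 < K := by positivity
  have hαK : α * K < 2 := by
    rw [lt_div_iff₀ hKpos] at hα2; linarith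
  have h2K : 0 < 2 - α * K := by linarith
  -- gradient vanishes at the minimizer
  have hgw : gradient h wstar = 0 := by
    have hlm : IsLocalMin h wstar := Filter.Eventually.of_forall fun v => hmin v
    simp [gradient, hlm.fderiv_eq_zero]
  -- convexity gradient inequality
  have hconv : ∀ y v, h y + ⟪gradient h y, v⟫ ≤ h (y + v) := by
    intro y v
    have h4 := strong_grad_ineq h μbar hdiff hsc y v
    have h5 : 0 ≤ (μbar / 2) * ‖v‖ ^ 2 := by positivity
    linarith
  have hmono := strong_mono h μbar hdiff hsc
  have hco := cocoercive h K hKpos hdiff hconv hLip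
  -- μbar ≤ K
  have hμK : μbar ≤ K := by
    set e : EuclideanSpace ℝ (Fin d) := EuclideanSpace.single ⟨0, hd⟩ 1 with he_def
    have he : ‖e‖ = 1 := by rw [he_def, EuclideanSpace.norm_single, norm_one]
    have h1 := hmono e 0
    have h2 := real_inner_le_norm (gradient h e - gradient h 0) (e - 0)
    have h3 := hLip e 0
    rw [sub_zero] at h1 h2 h3
    rw [he] at h1 h2 h3
    linarith [h1, h2, h3]
  set c := α * μbar * (2 - α * K) with hc
  have hcpos : 0 < c := mul_pos (mul_pos hα hμbar) h2K
  have hc0 : c ≠ 0 := ne_of_gt hcpos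
  have hc1 : c ≤ 1 := by
    rw [hc]
    linarith [sq_nonneg (1 - α * K),
      mul_nonneg (mul_nonneg hα.le (sub_nonneg.mpr hμK)) h2K.le]
  set ρ := 1 - c with hρdef
  have hρ0 : 0 ≤ ρ := by rw [hρdef]; linarith
  -- one-step contraction
  have hstep : ∀ k, ‖w (k + 1) - wstar‖ ^ 2 ≤ ρ * ‖w k - wstar‖ ^ 2 := by
    intro k
    set a := w k - wstar with ha
    set G := gradient h (w k) with hG
    have hexp : w (k + 1) - wstar = a - α • G := by
      rw [hiter k, ha, hG]; abel
    rw [hexp]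
    have h1 : ‖a - α • G‖ ^ 2 = ‖a‖ ^ 2 - 2 * (α * ⟪a, G⟫) + α ^ 2 * ‖G‖ ^ 2 := by
      rw [norm_sub_sq_real, real_inner_smul_right, norm_smul, Real.norm_eq_abs, mul_pow, sq_abs]
    have h2 : (1 / K) * ‖G‖ ^ 2 ≤ ⟪G, a⟫ := by
      have := hco (w k) wstar
      rwa [hgw, sub_zero] at this
    have h3 : μbar * ‖a‖ ^ 2 ≤ ⟪G, a⟫ := by
      have := hmono (w k) wstar
      rwa [hgw, sub_zero] at this
    have hsym : ⟪a, G⟫ = ⟪G, a⟫ := real_inner_comm _ _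
    have hG2 : ‖G‖ ^ 2 ≤ K * ⟪G, a⟫ := by
      rw [div_mul_eq_mul_div, div_le_iff₀ hKpos] at h2
      linarith [h2]
    have A := mul_le_mul_of_nonneg_left hG2 (sq_nonneg α)
    have B := mul_le_mul_of_nonneg_left h3 (mul_pos hα h2K).le
    rw [h1, hsym, hρdef, hc]
    linarith [A, B]
  -- iterate
  have hiterate : ∀ m, ‖w m - wstar‖ ^ 2 ≤ ρ ^ m * ‖w 0 - wstar‖ ^ 2 := by
    intro m
    induction m with
    | zero => simp
    | succ k ih =>
      calc ‖w (k + 1) - wstar‖ ^ 2 ≤ ρ * ‖w k - wstar‖ ^ 2 := hstep k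
        _ ≤ ρ * (ρ ^ k * ‖w 0 - wstar‖ ^ 2) := mul_le_mul_of_nonneg_left ih hρ0
        _ = ρ ^ (k + 1) * ‖w 0 - wstar‖ ^ 2 := by ring
  -- scalar estimates
  have hγμ : γ * μbar ≤ K := by
    have := mul_le_mul_of_nonneg_right hγ1 hμbar.le
    rw [one_mul] at this
    linarith
  set t := γ * μbar / K with ht
  have ht0 : 0 < t := by rw [ht]; positivity
  have ht1 : t ≤ 1 := by
    rw [ht, div_le_one hKpos]; exact hγμ
  have hlog : 0 ≤ Real.log (K / (γ * μbar)) := by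
    apply Real.log_nonneg
    rw [le_div_iff₀ (mul_pos hγ0 hμbar), one_mul]
    exact hγμ
  have hρexp : ρ ≤ Real.exp (-c) := by
    have := Real.add_one_le_exp (-c)
    rw [hρdef]; linarith
  have hρn : ρ ^ n ≤ Real.exp (-(c * n)) := by
    calc ρ ^ n ≤ (Real.exp (-c)) ^ n := pow_le_pow_left₀ hρ0 hρexp n
      _ = Real.exp (-(c * n)) := by rw [← Real.exp_nat_mul]; ring_nf
  have hcn : 4 * Real.log (K / (γ * μbar)) ≤ c * n := by
    rw [hβ] at hn
    have h5 := mul_le_mul_of_nonneg_left hn hcpos.le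
    have hcc : c * c⁻¹ = 1 := mul_inv_cancel₀ hc0
    calc 4 * Real.log (K / (γ * μbar))
        = (c * c⁻¹) * (4 * Real.log (K / (γ * μbar))) := by rw [hcc, one_mul]
      _ = c * (2 * (2 / c) * Real.log (K / (γ * μbar))) := by
          rw [div_eq_mul_inv]; ring
      _ ≤ c * n := h5
  have hexple : Real.exp (-(c * n)) ≤ t ^ 4 := by
    have h1 : Real.exp (-(c * n)) ≤ Real.exp (-(4 * Real.log (K / (γ * μbar)))) :=
      Real.exp_le_exp.mpr (by linarith)
    have hlogt : Real.log t = -Real.log (K / (γ * μbar)) := by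
      rw [ht, show γ * μbar / K = (K / (γ * μbar))⁻¹ by rw [inv_div], Real.log_inv]
    have h2 : Real.exp (-(4 * Real.log (K / (γ * μbar)))) = t ^ 4 := by
      rw [show -(4 * Real.log (K / (γ * μbar))) = (4 : ℕ) * Real.log t by rw [hlogt]; push_cast; ring,
        Real.exp_nat_mul, Real.exp_log ht0]
    linarith [h1, h2.le]
  have ht42 : t ^ 4 ≤ t ^ 2 := pow_le_pow_of_le_one ht0.le ht1 (by norm_num)
  have hρn2 : ρ ^ n ≤ t ^ 2 := le_trans hρn (le_trans hexple ht42)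
  -- assemble
  have hupper : ‖gradient h (w n)‖ ≤ K * ‖w n - wstar‖ := by
    have := hLip (w n) wstar
    rwa [hgw, sub_zero] at this
  have hlower : μbar * ‖w 0 - wstar‖ ≤ ‖gradient h (w 0)‖ := by
    have h1 : μbar * ‖w 0 - wstar‖ ^ 2 ≤ ⟪gradient h (w 0) - gradient h wstar, w 0 - wstar⟫ :=
      hmono (w 0) wstar
    rw [hgw, sub_zero] at h1
    have h2 := real_inner_le_norm (gradient h (w 0)) (w 0 - wstar)
    rcases eq_or_lt_of_le (norm_nonneg (w 0 - wstar)) with hz | hz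
    · rw [← hz, mul_zero]; exact norm_nonneg _
    · refine le_of_mul_le_mul_right ?_ hz
      calc μbar * ‖w 0 - wstar‖ * ‖w 0 - wstar‖ = μbar * ‖w 0 - wstar‖ ^ 2 := by ring
        _ ≤ ⟪gradient h (w 0), w 0 - wstar⟫ := h1
        _ ≤ ‖gradient h (w 0)‖ * ‖w 0 - wstar‖ := h2
  have sq1 : ‖gradient h (w n)‖ ^ 2 ≤ (γ * ‖gradient h (w 0)‖) ^ 2 := by
    have e1 : ‖gradient h (w n)‖ ^ 2 ≤ K ^ 2 * ‖w n - wstar‖ ^ 2 := by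
      calc ‖gradient h (w n)‖ ^ 2 ≤ (K * ‖w n - wstar‖) ^ 2 :=
            pow_le_pow_left₀ (norm_nonneg _) hupper 2
        _ = K ^ 2 * ‖w n - wstar‖ ^ 2 := by ring
    have e5 : (μbar * ‖w 0 - wstar‖) ^ 2 ≤ ‖gradient h (w 0)‖ ^ 2 :=
      pow_le_pow_left₀ (by positivity) hlower 2
    calc ‖gradient h (w n)‖ ^ 2 ≤ K ^ 2 * ‖w n - wstar‖ ^ 2 := e1
      _ ≤ K ^ 2 * (ρ ^ n * ‖w 0 - wstar‖ ^ 2) :=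
          mul_le_mul_of_nonneg_left (hiterate n) (sq_nonneg K)
      _ ≤ K ^ 2 * (t ^ 2 * ‖w 0 - wstar‖ ^ 2) :=
          mul_le_mul_of_nonneg_left
            (mul_le_mul_of_nonneg_right hρn2 (sq_nonneg _)) (sq_nonneg K)
      _ = γ ^ 2 * (μbar * ‖w 0 - wstar‖) ^ 2 := by
          rw [ht]; field_simp
      _ ≤ γ ^ 2 * ‖gradient h (w 0)‖ ^ 2 :=
          mul_le_mul_of_nonneg_left e5 (sq_nonneg γ)
      _ = (γ * ‖gradient h (w 0)‖) ^ 2 := by ring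
  exact (pow_le_pow_iff_left₀ (norm_nonneg _)
    (mul_nonneg hγ0.le (norm_nonneg _)) two_ne_zero).mp sq1
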